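/- arXiv:1102.5217 — 2 statements merged into one kernel-verified Lean document; each statement's English description precedes it below -/
import Mathlib

section
/- Let ν and ℓ be nonnegative integers with ν < ℓ. Let κ : ℝ → ℝ be a compactly supported integrable kernel of order (ν, ℓ), i.e., ∫ u^j κ(u) du = 0 for every integer j with 0 ≤ j < ℓ and j ≠ ν, ∫ u^ν κ(u) du = ν!, and ∫ |u^ℓ κ(u)| du < ∞. Let g : ℝ → ℝ be ℓ-times continuously differentiable with c₀ := sup_{x∈ℝ} |g^{(ℓ)}(x)| < ∞. Then for every t ∈ ℝ and every bandwidth b > 0, | ∫_ℝ g(t₁) κ((t₁ − t)/b) dt₁ − b^{ν+1} g^{(ν)}(t) | ≤ c₀ (b^{ℓ+1}/ℓ!) ∫_ℝ |u^ℓ κ(u)| du. -/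
open MeasureTheory Set

-- helper A
lemma myIterWithin_eq {n : ℕ} {g : ℝ → ℝ} (hg : ContDiff ℝ (n : ℕ∞) g)
    {s : Set ℝ} (hs : UniqueDiffOn ℝ s) {m : ℕ} (hm : m ≤ n) {x : ℝ} (hx : x ∈ s) :
    iteratedDerivWithin m g s x = iteratedDeriv m g x := by
  have h := (hg.contDiffOn : ContDiffOn ℝ (n : ℕ∞) g Set.univ).ftaylorSeriesWithin
      uniqueDiffOn_univ
  have h2 := (h.mono (Set.subset_univ s)).eq_iteratedFDerivWithin_of_uniqueDiffOn
      (by exact_mod_cast hm) hs hx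
  rw [iteratedDerivWithin_eq_iteratedFDerivWithin, iteratedDeriv_eq_iteratedFDeriv, ← h2,
    ftaylorSeriesWithin_univ]
  rfl

-- helper B: one-sided
lemma myTaylor_right {n : ℕ} {g : ℝ → ℝ} (hg : ContDiff ℝ ((n + 1 : ℕ) : ℕ∞) g)
    {c0 : ℝ} (hc0 : ∀ x, |iteratedDeriv (n + 1) g x| ≤ c0) {s x : ℝ} (hsx : s < x) :
    |g x - ∑ j ∈ Finset.range (n + 1), iteratedDeriv j g s * (x - s) ^ j / (j.factorial : ℝ)|
      ≤ c0 * |x - s| ^ (n + 1) / ((n + 1).factorial : ℝ) := by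
  have hU : UniqueDiffOn ℝ (Icc s x) := uniqueDiffOn_Icc hsx
  have hfd : DifferentiableOn ℝ (iteratedDerivWithin n g (Icc s x)) (Ioo s x) := by
    refine DifferentiableOn.congr
      ((hg.differentiable_iteratedDeriv n (by exact_mod_cast n.lt_succ_self)).differentiableOn)
      fun y hy => ?_
    exact myIterWithin_eq hg hU n.le_succ (Ioo_subset_Icc_self hy)
  obtain ⟨x', hx', hlag⟩ := taylor_mean_remainder_lagrange (f := g) (n := n) hsx.ne
    (by rw [uIcc_of_le hsx.le]; exact (hg.of_le (by exact_mod_cast n.le_succ)).contDiffOn)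
    (by rw [uIcc_of_le hsx.le, uIoo_of_le hsx.le]; exact hfd)
  rw [uIcc_of_le hsx.le] at hlag
  rw [uIoo_of_le hsx.le] at hx'
  have hT : taylorWithinEval g n (Icc s x) s x
      = ∑ j ∈ Finset.range (n + 1), iteratedDeriv j g s * (x - s) ^ j / (j.factorial : ℝ) := by
    rw [taylor_within_apply]
    refine Finset.sum_congr rfl fun j hj => ?_
    have hle : j ≤ n + 1 := Nat.le_of_lt_succ (Finset.mem_range.mp hj) |>.trans n.le_succ
    rw [myIterWithin_eq hg hU hle (left_mem_Icc.mpr hsx.le), smul_eq_mul]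
    ring
  rw [← hT, hlag, myIterWithin_eq hg hU le_rfl (Ioo_subset_Icc_self hx'), abs_div, abs_mul,
    abs_pow, Nat.abs_cast]
  gcongr
  exact hc0 x'

-- helper C: global
lemma myTaylor_global {n : ℕ} {g : ℝ → ℝ} (hg : ContDiff ℝ ((n + 1 : ℕ) : ℕ∞) g)
    {c0 : ℝ} (hc0 : ∀ x, |iteratedDeriv (n + 1) g x| ≤ c0) (s x : ℝ) :
    |g x - ∑ j ∈ Finset.range (n + 1), iteratedDeriv j g s * (x - s) ^ j / (j.factorial : ℝ)|
      ≤ c0 * |x - s| ^ (n + 1) / ((n + 1).factorial : ℝ) := by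
  rcases lt_trichotomy s x with h | h | h
  · exact myTaylor_right hg hc0 h
  · subst h
    have hz : ∑ j ∈ Finset.range (n + 1),
        iteratedDeriv j g s * (0 : ℝ) ^ j / (j.factorial : ℝ) = g s := by
      rw [Finset.sum_eq_single 0]
      · simp
      · intro j _ hj
        simp [zero_pow hj]
      · simp
    simp only [sub_self]
    rw [hz]
    simp
  · -- x < s : apply to y ↦ g (-y)
    have hg' : ContDiff ℝ ((n + 1 : ℕ) : ℕ∞) (fun y => g (-y)) := hg.comp contDiff_neg
    have hder : ∀ (j : ℕ) (y : ℝ),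
        iteratedDeriv j (fun y => g (-y)) y = (-1 : ℝ) ^ j * iteratedDeriv j g (-y) := by
      intro j y
      rw [iteratedDeriv_comp_neg]
      simp [smul_eq_mul]
    have hc0' : ∀ y, |iteratedDeriv (n + 1) (fun y => g (-y)) y| ≤ c0 := by
      intro y
      rw [hder, abs_mul, abs_pow, abs_neg, abs_one, one_pow, one_mul]
      exact hc0 (-y)
    have key := myTaylor_right hg' hc0' (s := -s) (x := -x) (by linarith)
    have hsum : ∑ j ∈ Finset.range (n + 1),
        iteratedDeriv j (fun y => g (-y)) (-s) * (-x - -s) ^ j / (j.factorial : ℝ)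
        = ∑ j ∈ Finset.range (n + 1),
          iteratedDeriv j g s * (x - s) ^ j / (j.factorial : ℝ) := by
      refine Finset.sum_congr rfl fun j _ => ?_
      rw [hder, neg_neg]
      have h1 : (-x - -s : ℝ) = (-1) * (x - s) := by ring
      rw [h1, mul_pow]
      have h2 : (-1 : ℝ) ^ j * iteratedDeriv j g s * ((-1 : ℝ) ^ j * (x - s) ^ j)
          / (j.factorial : ℝ) = ((-1 : ℝ) ^ j * (-1 : ℝ) ^ j)
          * (iteratedDeriv j g s * (x - s) ^ j / (j.factorial : ℝ)) := by ring
      rw [h2, ← mul_pow]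
      norm_num
    rw [hsum] at key
    have habs : |-x - -s| = |x - s| := by rw [abs_sub_comm]; congr 1; ring
    rw [habs] at key
    simpa using key



open MeasureTheory

/-- Bias bound for kernel smoothing with a kernel of order `(ν, ℓ)` (proof of Lemma 1):
`|∫ g(t₁) κ((t₁−t)/b) dt₁ − b^{ν+1} g^{(ν)}(t)| ≤ c₀ (b^{ℓ+1}/ℓ!) ∫ |u^ℓ κ(u)| du`. -/
theorem stmt4
    (ν ℓ : ℕ) (hνℓ : ν < ℓ)
    (κ : ℝ → ℝ) (hκc : HasCompactSupport κ) (hκi : Integrable κ)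
    (hmom0 : ∀ j : ℕ, j < ℓ → j ≠ ν → ∫ u : ℝ, u ^ j * κ u = 0)
    (hmomν : ∫ u : ℝ, u ^ ν * κ u = (Nat.factorial ν : ℝ))
    (hmomℓ : Integrable (fun u : ℝ => u ^ ℓ * κ u))
    (g : ℝ → ℝ) (hg : ContDiff ℝ (ℓ : ℕ∞) g)
    (c0 : ℝ) (hc0 : ∀ x, |iteratedDeriv ℓ g x| ≤ c0)
    (t b : ℝ) (hb : 0 < b) :
    |(∫ t1 : ℝ, g t1 * κ ((t1 - t) / b)) - b ^ (ν + 1) * iteratedDeriv ν g t|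
      ≤ c0 * (b ^ (ℓ + 1) / (Nat.factorial ℓ : ℝ)) * ∫ u : ℝ, |u ^ ℓ * κ u| := by

  obtain ⟨n, rfl⟩ : ∃ n, ℓ = n + 1 := ⟨ℓ - 1, by omega⟩
  -- bound on the support of κ
  obtain ⟨R, hR0, hRK⟩ : ∃ R, 0 ≤ R ∧ ∀ u ∈ tsupport κ, |u| ≤ R := by
    obtain ⟨R, hR⟩ := hκc.isCompact.isBounded.subset_closedBall 0
    exact ⟨max R 0, le_max_right _ _, fun u hu =>
      le_trans (by simpa [Real.norm_eq_abs] using hR hu) (le_max_left _ _)⟩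
  -- integrability of moments
  have hmul : ∀ j : ℕ, Integrable (fun u : ℝ => u ^ j * κ u) := by
    intro j
    refine (hκi.norm.const_mul (R ^ j)).mono'
      ((continuous_pow j).aestronglyMeasurable.mul hκi.aestronglyMeasurable)
      (Filter.Eventually.of_forall fun u => ?_)
    by_cases hu : κ u = 0
    · simp [hu]
    · have hmem : u ∈ tsupport κ := subset_tsupport κ hu
      calc ‖u ^ j * κ u‖ = |u| ^ j * ‖κ u‖ := by
            rw [Real.norm_eq_abs, abs_mul, abs_pow]; rfl
        _ ≤ R ^ j * ‖κ u‖ := by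
            gcongr
            · exact hRK u hmem
  -- integrability of g(bu+t)κ(u)
  have hgc : Continuous fun u : ℝ => g (b * u + t) :=
    hg.continuous.comp (by continuity)
  obtain ⟨M, hM⟩ := hκc.isCompact.exists_bound_of_continuousOn hgc.continuousOn
  have hFi : Integrable (fun u : ℝ => g (b * u + t) * κ u) := by
    refine (hκi.norm.const_mul M).mono'
      (hgc.aestronglyMeasurable.mul hκi.aestronglyMeasurable)
      (Filter.Eventually.of_forall fun u => ?_)
    by_cases hu : κ u = 0
    · simp [hu]
    · have hmem : u ∈ tsupport κ := subset_tsupport κ hu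
      calc ‖g (b * u + t) * κ u‖ = ‖g (b * u + t)‖ * ‖κ u‖ := norm_mul _ _
        _ ≤ M * ‖κ u‖ := by gcongr; exact hM u hmem
  -- the Taylor polynomial part
  set Tsum : ℝ → ℝ := fun u => ∑ j ∈ Finset.range (n + 1),
    iteratedDeriv j g t * (b * u) ^ j / (j.factorial : ℝ) with hTsum
  have hexp : (fun u : ℝ => Tsum u * κ u)
      = fun u : ℝ => ∑ j ∈ Finset.range (n + 1),
        (iteratedDeriv j g t * b ^ j / (j.factorial : ℝ)) * (u ^ j * κ u) := by
    funext u
    rw [hTsum, Finset.sum_mul]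
    refine Finset.sum_congr rfl fun j _ => ?_
    rw [mul_pow]; ring
  have hPint : Integrable (fun u : ℝ => Tsum u * κ u) := by
    rw [hexp]
    exact integrable_finset_sum _ fun j _ => (hmul j).const_mul _
  have hPval : (∫ u : ℝ, Tsum u * κ u) = b ^ ν * iteratedDeriv ν g t := by
    rw [hexp, integral_finset_sum _ fun j _ => (hmul j).const_mul _]
    have : ∀ j ∈ Finset.range (n + 1),
        (∫ u : ℝ, (iteratedDeriv j g t * b ^ j / (j.factorial : ℝ)) * (u ^ j * κ u))
        = (iteratedDeriv j g t * b ^ j / (j.factorial : ℝ)) * ∫ u : ℝ, u ^ j * κ u :=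
      fun j _ => integral_const_mul _ _
    rw [Finset.sum_congr rfl this, Finset.sum_eq_single ν]
    · rw [hmomν]
      field_simp [Nat.factorial_ne_zero]
    · intro j hj hjν
      rw [hmom0 j (Finset.mem_range.mp hj) hjν, mul_zero]
    · intro h
      exact absurd (Finset.mem_range.mpr hνℓ) h
  -- change of variables
  have hcv : (∫ t1 : ℝ, g t1 * κ ((t1 - t) / b))
      = b * ∫ u : ℝ, g (b * u + t) * κ u := by
    have h1 : (∫ x : ℝ, g (x + t) * κ (x / b)) = ∫ t1 : ℝ, g t1 * κ ((t1 - t) / b) := by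
      have := integral_add_right_eq_self (μ := volume)
        (fun t1 : ℝ => g t1 * κ ((t1 - t) / b)) t
      simpa [add_sub_cancel_right] using this
    have h2 := MeasureTheory.Measure.integral_comp_mul_left
      (fun x : ℝ => g (x + t) * κ (x / b)) b
    have h3 : ∀ u : ℝ, b * u / b = u := fun u => mul_div_cancel_left₀ _ hb.ne'
    simp only [h3] at h2
    rw [h1] at h2
    rw [h2, smul_eq_mul, abs_of_pos (inv_pos.mpr hb)]
    field_simp
  -- remainder
  have hrem : ∀ u : ℝ, |g (b * u + t) - Tsum u|
      ≤ c0 * |b * u| ^ (n + 1) / ((n + 1).factorial : ℝ) := by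
    intro u
    have := myTaylor_global hg hc0 t (b * u + t)
    simpa [add_sub_cancel_right] using this
  have hRint' : Integrable (fun u : ℝ => (g (b * u + t) - Tsum u) * κ u) := by
    have : (fun u : ℝ => (g (b * u + t) - Tsum u) * κ u)
        = fun u : ℝ => g (b * u + t) * κ u - Tsum u * κ u := by funext u; ring
    rw [this]
    exact hFi.sub hPint
  have hbound : |∫ u : ℝ, (g (b * u + t) - Tsum u) * κ u|
      ≤ (c0 * b ^ (n + 1) / ((n + 1).factorial : ℝ)) * ∫ u : ℝ, |u ^ (n + 1) * κ u| := by
    rw [← Real.norm_eq_abs, ← integral_const_mul]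
    refine norm_integral_le_of_norm_le ((hmomℓ.abs).const_mul _)
      (Filter.Eventually.of_forall fun u => ?_)
    calc ‖(g (b * u + t) - Tsum u) * κ u‖ = |g (b * u + t) - Tsum u| * |κ u| := by
          rw [Real.norm_eq_abs, abs_mul]
      _ ≤ (c0 * |b * u| ^ (n + 1) / ((n + 1).factorial : ℝ)) * |κ u| :=
          mul_le_mul_of_nonneg_right (hrem u) (abs_nonneg _)
      _ = c0 * b ^ (n + 1) / ((n + 1).factorial : ℝ) * |u ^ (n + 1) * κ u| := by
          rw [abs_mul, abs_mul, abs_pow, mul_pow, abs_of_pos hb]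
          ring
  have hsplit : (∫ u : ℝ, g (b * u + t) * κ u)
      = (∫ u : ℝ, Tsum u * κ u) + ∫ u : ℝ, (g (b * u + t) - Tsum u) * κ u := by
    have h4 : (fun u : ℝ => g (b * u + t) * κ u)
        = fun u : ℝ => Tsum u * κ u + (g (b * u + t) - Tsum u) * κ u := by funext u; ring
    rw [h4, integral_add hPint hRint']
  rw [hcv, hsplit, hPval]
  have h5 : b * (b ^ ν * iteratedDeriv ν g t + ∫ u : ℝ, (g (b * u + t) - Tsum u) * κ u)
      - b ^ (ν + 1) * iteratedDeriv ν g t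
      = b * ∫ u : ℝ, (g (b * u + t) - Tsum u) * κ u := by ring
  rw [h5, abs_mul, abs_of_pos hb]
  calc b * |∫ u : ℝ, (g (b * u + t) - Tsum u) * κ u|
      ≤ b * ((c0 * b ^ (n + 1) / ((n + 1).factorial : ℝ)) * ∫ u : ℝ, |u ^ (n + 1) * κ u|) :=
        mul_le_mul_of_nonneg_left hbound hb.le
    _ = c0 * (b ^ (n + 1 + 1) / ((n + 1).factorial : ℝ)) * ∫ u : ℝ, |u ^ (n + 1) * κ u| := by
        ring
end

section
/- Let H be a real normed vector space and Z = [0,1]. Let β : ℝ → H be twice continuously differentiable with sup_{z∈[0,1]} ‖β''(z)‖ =: M < ∞. Suppose that for each n we are given: grid points z^{(n)}_1, …, z^{(n)}_{P_n} ∈ [0,1]; weight functions ω^{(n)}_p : [0,1] → ℝ satisfying, for every z ∈ [0,1], Σ_p ω^{(n)}_p(z) = 1, Σ_p ω^{(n)}_p(z)(z^{(n)}_p − z) = 0, Σ_p |ω^{(n)}_p(z)| ≤ C, and Σ_p |ω^{(n)}_p(z)| (z^{(n)}_p − z)² ≤ C b_n², where C < ∞ is a constant and b_n → 0; and raw estimates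 β̃_n(p) ∈ H with ε_n := max_{1≤p≤P_n} ‖β̃_n(p) − β(z^{(n)}_p)‖ → 0 as n → ∞. Define the refined estimates β̂_n(z) = Σ_{p=1}^{P_n} ω^{(n)}_p(z) β̃_n(p). Then sup_{z∈[0,1]} ‖β̂_n(z) − β(z)‖ → 0 as n → ∞; in particular ∫_0^1 ‖β̂_n(z) − β(z)‖² dz → 0. -/
open MeasureTheory Filter Topology

/-- Second-order Taylor bound on `[0,1]` for a `C²` curve. -/
lemma taylor2_bound {H : Type*} [NormedAddCommGroup H] [NormedSpace ℝ H]
    (β : ℝ → H) (hβ : ContDiff ℝ 2 β)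
    (M : ℝ) (hM : ∀ z ∈ Set.Icc (0 : ℝ) 1, ‖iteratedDeriv 2 β z‖ ≤ M)
    {z x : ℝ} (hz : z ∈ Set.Icc (0 : ℝ) 1) (hx : x ∈ Set.Icc (0 : ℝ) 1) :
    ‖β x - β z - (x - z) • deriv β z‖ ≤ M * (x - z) ^ 2 := by
  have hβ1 : Differentiable ℝ β := hβ.differentiable (by norm_num)
  have hβ' : ContDiff ℝ (1 + 1 : ℕ) β := by exact_mod_cast hβ
  have hd1d : Differentiable ℝ (deriv β) :=
    ((contDiff_succ_iff_deriv (n := 1)).mp (by norm_num; exact hβ)).2.2.differentiable (by simp)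
  have hIcc : Set.uIcc z x ⊆ Set.Icc (0 : ℝ) 1 := Set.uIcc_subset_Icc hz hx
  -- Lipschitz bound for `deriv β` on `Icc 0 1`
  have lip : ∀ s ∈ Set.Icc (0 : ℝ) 1, ∀ t ∈ Set.Icc (0 : ℝ) 1,
      ‖deriv β t - deriv β s‖ ≤ M * ‖t - s‖ := by
    intro s hs t ht
    have hconv : Convex ℝ (Set.Icc (0 : ℝ) 1) := convex_Icc _ _
    refine hconv.norm_image_sub_le_of_norm_hasDerivWithin_le
      (fun y hy => (hd1d y).hasDerivAt.hasDerivWithinAt) ?_ hs ht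
    intro y hy
    have : deriv (deriv β) y = iteratedDeriv 2 β y := by
      rw [iteratedDeriv_succ, iteratedDeriv_one]
    rw [this]
    exact hM y hy
  -- apply MVT to `φ t = β t - (t - z) • deriv β z` on `uIcc z x`
  set v := deriv β z with hv
  have hφ : ∀ t ∈ Set.uIcc z x,
      HasDerivWithinAt (fun t => β t - (t - z) • v) (deriv β t - v) (Set.uIcc z x) t := by
    intro t ht
    have h1 : HasDerivAt β (deriv β t) t := (hβ1 t).hasDerivAt
    have h2 : HasDerivAt (fun t : ℝ => (t - z) • v) ((1 : ℝ) • v) t :=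
      ((hasDerivAt_id t).sub_const z).smul_const v
    have h3 : HasDerivWithinAt (fun t => β t - (t - z) • v) (deriv β t - (1 : ℝ) • v)
        (Set.uIcc z x) t := (h1.sub h2).hasDerivWithinAt
    rw [one_smul] at h3
    exact h3
  have hbound : ∀ t ∈ Set.uIcc z x, ‖deriv β t - v‖ ≤ M * |x - z| := by
    intro t ht
    have h1 : ‖deriv β t - v‖ ≤ M * ‖t - z‖ := lip z hz t (hIcc ht)
    have h2 : dist t z ≤ dist x z := Real.dist_le_of_mem_uIcc (Set.uIcc_comm z x ▸ ht) Set.right_mem_uIcc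
    have hM0 : 0 ≤ M := le_trans (norm_nonneg _) (hM 0 (by norm_num))
    calc ‖deriv β t - v‖ ≤ M * ‖t - z‖ := h1
      _ ≤ M * |x - z| := by
          apply mul_le_mul_of_nonneg_left _ hM0
          simpa [Real.dist_eq] using h2
  have key := (convex_uIcc z x).norm_image_sub_le_of_norm_hasDerivWithin_le hφ hbound
      Set.left_mem_uIcc Set.right_mem_uIcc
  have : ‖(β x - (x - z) • v) - (β z - (z - z) • v)‖ ≤ M * |x - z| * ‖x - z‖ := key
  calc ‖β x - β z - (x - z) • v‖
      = ‖(β x - (x - z) • v) - (β z - (z - z) • v)‖ := by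
        rw [sub_self, zero_smul, sub_zero]; congr 1; abel
    _ ≤ M * |x - z| * ‖x - z‖ := this
    _ = M * (x - z) ^ 2 := by
        rw [Real.norm_eq_abs, mul_assoc, abs_mul_abs_self, ← sq]

/-- Deterministic skeleton of Theorem 1: if bin-wise raw estimates of a twice continuously
differentiable `H`-valued curve `β` are uniformly consistent at the grid points, and the
smoothing weights reproduce constants and linear functions, have total absolute mass `≤ C`
and second-moment mass `≤ C bₙ²` with `bₙ → 0`, then the refined estimator
`β̂ₙ(z) = Σ_p ωₙ_p(z) β̃ₙ(p)` converges to `β` uniformly on `[0,1]`, and hence in integrated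
squared error. -/
theorem stmt14
    {H : Type*} [NormedAddCommGroup H] [NormedSpace ℝ H]
    (β : ℝ → H) (hβ : ContDiff ℝ 2 β)
    (M : ℝ) (hM : ∀ z ∈ Set.Icc (0 : ℝ) 1, ‖iteratedDeriv 2 β z‖ ≤ M)
    (Pn : ℕ → ℕ) (zg : (n : ℕ) → Fin (Pn n) → ℝ)
    (hzg : ∀ n p, zg n p ∈ Set.Icc (0 : ℝ) 1)
    (ω : (n : ℕ) → Fin (Pn n) → ℝ → ℝ)
    (C : ℝ) (bn : ℕ → ℝ) (hbn : Tendsto bn atTop (𝓝 0))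
    (hω1 : ∀ n, ∀ z ∈ Set.Icc (0 : ℝ) 1, ∑ p, ω n p z = 1)
    (hωz : ∀ n, ∀ z ∈ Set.Icc (0 : ℝ) 1, ∑ p, ω n p z * (zg n p - z) = 0)
    (hωabs : ∀ n, ∀ z ∈ Set.Icc (0 : ℝ) 1, ∑ p, |ω n p z| ≤ C)
    (hω2 : ∀ n, ∀ z ∈ Set.Icc (0 : ℝ) 1, ∑ p, |ω n p z| * (zg n p - z) ^ 2 ≤ C * (bn n) ^ 2)
    (βt : (n : ℕ) → Fin (Pn n) → H)
    (ε : ℕ → ℝ) (hε : Tendsto ε atTop (𝓝 0))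
    (hεb : ∀ n p, ‖βt n p - β (zg n p)‖ ≤ ε n) :
    TendstoUniformlyOn (fun n z => ∑ p, (ω n p z) • βt n p) β atTop (Set.Icc 0 1)
    ∧ Tendsto (fun n => ∫ z in Set.Icc (0 : ℝ) 1, ‖(∑ p, (ω n p z) • βt n p) - β z‖ ^ 2)
        atTop (𝓝 0) := by
  have hM0 : 0 ≤ M := le_trans (norm_nonneg _) (hM 0 (by norm_num))
  -- each grid is nonempty, so `ε n ≥ 0` and `C ≥ 0`
  have hP : ∀ n, 0 < Pn n := by
    intro n
    by_contra h
    push_neg at h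
    have h0 : Pn n = 0 := Nat.le_zero.mp h
    haveI : IsEmpty (Fin (Pn n)) := by rw [h0]; infer_instance
    have := hω1 n 0 (by norm_num)
    rw [Finset.univ_eq_empty, Finset.sum_empty] at this
    exact zero_ne_one this
  have hε0 : ∀ n, 0 ≤ ε n := fun n =>
    le_trans (norm_nonneg _) (hεb n ⟨0, hP n⟩)
  have hC0 : 0 ≤ C := le_trans (Finset.sum_nonneg fun p _ => abs_nonneg _)
    (hωabs 0 0 (by norm_num))
  set D : ℕ → ℝ := fun n => C * ε n + M * (C * bn n ^ 2) with hD
  have hD0 : ∀ n, 0 ≤ D n := fun n => add_nonneg (mul_nonneg hC0 (hε0 n))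
    (mul_nonneg hM0 (mul_nonneg hC0 (sq_nonneg _)))
  have hDto : Tendsto D atTop (𝓝 0) := by
    have h1 : Tendsto (fun n => C * ε n) atTop (𝓝 (C * 0)) := hε.const_mul C
    have h2 : Tendsto (fun n => M * (C * bn n ^ 2)) atTop (𝓝 (M * (C * 0 ^ 2))) :=
      ((hbn.pow 2).const_mul C).const_mul M
    simpa using h1.add h2
  -- main pointwise bound
  have main : ∀ n, ∀ z ∈ Set.Icc (0 : ℝ) 1,
      ‖(∑ p, (ω n p z) • βt n p) - β z‖ ≤ D n := by
    intro n z hz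
    have key : (∑ p, ω n p z • βt n p) - β z
        = (∑ p, ω n p z • (βt n p - β (zg n p)))
          + ∑ p, ω n p z • (β (zg n p) - β z - (zg n p - z) • deriv β z) := by
      have h1 : (∑ p, ω n p z) • β z = β z := by rw [hω1 n z hz, one_smul]
      have h2 : (∑ p, ω n p z * (zg n p - z)) • deriv β z = 0 := by
        rw [hωz n z hz, zero_smul]
      simp only [smul_sub, Finset.sum_sub_distrib, smul_smul, ← Finset.sum_smul]
      rw [h1, h2]
      abel
    rw [key]
    have b1 : ‖∑ p, ω n p z • (βt n p - β (zg n p))‖ ≤ C * ε n := by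
      calc ‖∑ p, ω n p z • (βt n p - β (zg n p))‖
          ≤ ∑ p, ‖ω n p z • (βt n p - β (zg n p))‖ := norm_sum_le _ _
        _ ≤ ∑ p, |ω n p z| * ε n := by
            apply Finset.sum_le_sum
            intro p _
            rw [norm_smul, Real.norm_eq_abs]
            exact mul_le_mul_of_nonneg_left (hεb n p) (abs_nonneg _)
        _ = (∑ p, |ω n p z|) * ε n := by rw [Finset.sum_mul]
        _ ≤ C * ε n := mul_le_mul_of_nonneg_right (hωabs n z hz) (hε0 n)
    have b2 : ‖∑ p, ω n p z • (β (zg n p) - β z - (zg n p - z) • deriv β z)‖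
        ≤ M * (C * bn n ^ 2) := by
      calc ‖∑ p, ω n p z • (β (zg n p) - β z - (zg n p - z) • deriv β z)‖
          ≤ ∑ p, ‖ω n p z • (β (zg n p) - β z - (zg n p - z) • deriv β z)‖ := norm_sum_le _ _
        _ ≤ ∑ p, |ω n p z| * (M * (zg n p - z) ^ 2) := by
            apply Finset.sum_le_sum
            intro p _
            rw [norm_smul, Real.norm_eq_abs]
            exact mul_le_mul_of_nonneg_left
              (taylor2_bound β hβ M hM hz (hzg n p)) (abs_nonneg _)
        _ = M * ∑ p, |ω n p z| * (zg n p - z) ^ 2 := by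
            rw [Finset.mul_sum]; congr 1; ext p; ring
        _ ≤ M * (C * bn n ^ 2) := mul_le_mul_of_nonneg_left (hω2 n z hz) hM0
    calc ‖(∑ p, ω n p z • (βt n p - β (zg n p)))
          + ∑ p, ω n p z • (β (zg n p) - β z - (zg n p - z) • deriv β z)‖
        ≤ _ + _ := norm_add_le _ _
      _ ≤ C * ε n + M * (C * bn n ^ 2) := add_le_add b1 b2
  constructor
  · rw [Metric.tendstoUniformlyOn_iff]
    intro δ hδ
    filter_upwards [hDto.eventually (gt_mem_nhds hδ)] with n hn z hz
    rw [dist_eq_norm, ← norm_neg]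
    simpa using lt_of_le_of_lt (main n z hz) hn
  · have hvol : (volume (Set.Icc (0 : ℝ) 1)).toReal = 1 := by
      simp [Real.volume_Icc]
    refine squeeze_zero (g := fun n => D n ^ 2)
      (fun n => setIntegral_nonneg measurableSet_Icc (fun z _ => by positivity)) ?_ ?_
    · intro n
      have := norm_setIntegral_le_of_norm_le_const (μ := volume) (s := Set.Icc (0:ℝ) 1)
        (f := fun z => ‖(∑ p, (ω n p z) • βt n p) - β z‖ ^ 2) (C := D n ^ 2)
        (by rw [Real.volume_Icc]; norm_num)
        (fun z hz => by
          rw [Real.norm_eq_abs, abs_of_nonneg (by positivity)]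
          exact pow_le_pow_left₀ (norm_nonneg _) (main n z hz) 2)
      rw [Measure.real, hvol, mul_one] at this
      exact le_trans (le_abs_self _) this
    · simpa using hDto.pow 2
end
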